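/- Let 1→2→⋯→m be an m-vertex directed path (m ≥ 2) with real matrices C_2,…,C_m with n columns on the arcs and K_i = kernel(C_i). Then: (a) for all x_1,…,x_m ∈ ℝ^n satisfying x_1 = x_m, the relations C_i(x_i − x_{i−1}) = 0 for i = 2,…,m imply x_1 = x_2 = ⋯ = x_m, if and only if {K_2,…,K_m} is an independent family of subspaces of ℝ^n; (b) consequently, there exist such matrices C_2,…,C_m with all K_i ≠ {0} making this implication hold if and only if m − 1 ≤ n. -/

import Mathlib

/-- A finite family of subspaces `S i` is independent if `S i ∩ (∑_{j ≠ i} S j) = 0` for all `i`. -/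
def IndepFamily {ι V : Type*} [AddCommGroup V] [Module ℝ V] (S : ι → Submodule ℝ V) : Prop :=
  ∀ i : ι, S i ⊓ (⨆ j ∈ ({i}ᶜ : Set ι), S j) = ⊥

section Aux

lemma indepFamily_iff_iSupIndep {ι V : Type*} [AddCommGroup V] [Module ℝ V]
    (S : ι → Submodule ℝ V) : IndepFamily S ↔ iSupIndep S := by
  unfold IndepFamily iSupIndep
  simp only [Set.mem_compl_iff, Set.mem_singleton_iff, disjoint_iff, ne_eq]

lemma indepFamily_iff_sum {ι V : Type*} [Fintype ι] [DecidableEq ι] [AddCommGroup V]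
    [Module ℝ V] (S : ι → Submodule ℝ V) :
    IndepFamily S ↔ ∀ v : ι → V, (∀ i, v i ∈ S i) → ∑ i, v i = 0 → ∀ i, v i = 0 := by
  constructor
  · intro h v hv hsum i
    have hvi : v i = -∑ j ∈ Finset.univ.erase i, v j := by
      have h2 := Finset.add_sum_erase Finset.univ v (Finset.mem_univ i)
      rw [hsum] at h2
      exact eq_neg_of_add_eq_zero_left h2
    have h2 : v i ∈ ⨆ j ∈ ({i}ᶜ : Set ι), S j := by
      rw [hvi]
      refine neg_mem (Submodule.sum_mem _ fun j hj => ?_)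
      exact Submodule.mem_iSup_of_mem j
        (Submodule.mem_iSup_of_mem (Finset.ne_of_mem_erase hj) (hv j))
    have h3 : v i ∈ (⊥ : Submodule ℝ V) := h i ▸ Submodule.mem_inf.mpr ⟨hv i, h2⟩
    simpa using h3
  · intro h i
    rw [eq_bot_iff]
    intro x hx
    obtain ⟨hxS, hxU⟩ := Submodule.mem_inf.mp hx
    rw [Submodule.mem_iSup_iff_exists_finsupp] at hxU
    obtain ⟨f, hf, hfx⟩ := hxU
    have hfi : f i = 0 := by
      have h1 := hf i
      rw [iSup_neg (by simp)] at h1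
      simpa using h1
    have hfmem : ∀ j, j ≠ i → f j ∈ S j := fun j hj => by
      have h1 := hf j
      rwa [iSup_pos (by simpa using hj)] at h1
    have hxsum : x = ∑ j, f j := by
      rw [← hfx, Finsupp.sum_fintype]
      simp
    set v : ι → V := fun j => if j = i then -x else f j with hv
    have hvmem : ∀ j, v j ∈ S j := by
      intro j
      by_cases hj : j = i
      · subst hj; simpa [hv] using neg_mem hxS
      · simpa [hv, hj] using hfmem j hj
    have hvsum : ∑ j, v j = 0 := by
      rw [← Finset.add_sum_erase Finset.univ v (Finset.mem_univ i)]
      have h1 : ∑ j ∈ Finset.univ.erase i, v j = ∑ j ∈ Finset.univ.erase i, f j :=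
        Finset.sum_congr rfl fun j hj => by simp [hv, Finset.ne_of_mem_erase hj]
      have h2 : ∑ j ∈ Finset.univ.erase i, f j = x := by
        have := Finset.add_sum_erase Finset.univ f (Finset.mem_univ i)
        rw [hfi, zero_add] at this
        rw [this, ← hxsum]
      rw [h1, h2]
      simp [hv]
    have := h v hvmem hvsum i
    simp only [hv, if_pos rfl, neg_eq_zero] at this
    simpa using this

lemma fin_ne_zero {m : ℕ} [NeZero m] (i : Fin m) : i ≠ 0 ↔ i.val ≠ 0 := by
  rw [ne_eq, Fin.ext_iff, Fin.val_zero]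

lemma fin_sub_one {m : ℕ} [NeZero m] (hm : 2 ≤ m) (i : Fin m) (hi : i ≠ 0) :
    i - 1 = ⟨i.val - 1, by omega⟩ := by
  have h0 : i.val ≠ 0 := (fin_ne_zero i).mp hi
  have h2 : i.val < m := i.isLt
  apply Fin.ext
  rw [Fin.sub_def]
  have h1 : (1 : Fin m).val = 1 := by rw [Fin.val_one', Nat.mod_eq_of_lt (by omega)]
  simp only [h1]
  have h3 : m - 1 + i.val = (i.val - 1) + m := by omega
  rw [h3, Nat.add_mod_right, Nat.mod_eq_of_lt (by omega)]

def pathEquiv (m : ℕ) [NeZero m] : Fin (m - 1) ≃ {i : Fin m // i ≠ 0} where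
  toFun j := ⟨⟨j.1 + 1, by have := j.isLt; omega⟩, by
    rw [fin_ne_zero]; simp⟩
  invFun i := ⟨i.1.1 - 1, by
    have h1 := (fin_ne_zero i.1).mp i.2
    have h2 := i.1.isLt
    omega⟩
  left_inv j := by simp
  right_inv i := by
    have h1 := (fin_ne_zero i.1).mp i.2
    apply Subtype.ext
    apply Fin.ext
    simp
    omega

lemma telescope {m : ℕ} [NeZero m] (hm : 2 ≤ m) {V : Type*} [AddCommGroup V]
    (f : Fin m → V) :
    ∑ i : {i : Fin m // i ≠ 0}, (f i.1 - f (i.1 - 1)) = f ⟨m - 1, Nat.sub_one_lt (by omega)⟩ - f 0 := by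
  classical
  have hm0 : 0 < m := by omega
  set g : ℕ → V := fun t => f ⟨t % m, Nat.mod_lt t hm0⟩ with hg
  have hgt : ∀ (t : ℕ) (h : t < m), g t = f ⟨t, h⟩ := fun t h =>
    congrArg f (Fin.ext (Nat.mod_eq_of_lt h))
  have hterm : ∀ j : Fin (m - 1),
      f ((pathEquiv m j)).1 - f (((pathEquiv m j)).1 - 1) = g (j.1 + 1) - g j.1 := by
    intro j
    have hj : j.1 < m - 1 := j.isLt
    have hlt : j.1 + 1 < m := by omega
    have h1 : ((pathEquiv m j)).1 = ⟨j.1 + 1, hlt⟩ := rfl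
    have hne : (⟨j.1 + 1, hlt⟩ : Fin m) ≠ 0 := by rw [fin_ne_zero]; simp
    have h2 : (⟨j.1 + 1, hlt⟩ : Fin m) - 1 = ⟨j.1, by omega⟩ := by
      rw [fin_sub_one hm _ hne]
      exact Fin.ext (by simp)
    rw [h1, h2, hgt (j.1 + 1) hlt, hgt j.1 (by omega)]
  calc ∑ i : {i : Fin m // i ≠ 0}, (f i.1 - f (i.1 - 1))
      = ∑ j : Fin (m - 1), (f ((pathEquiv m j)).1 - f (((pathEquiv m j)).1 - 1)) :=
        (Equiv.sum_comp (pathEquiv m) _).symm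
    _ = ∑ j : Fin (m - 1), (g (j.1 + 1) - g j.1) := Finset.sum_congr rfl (fun j _ => hterm j)
    _ = ∑ t ∈ Finset.range (m - 1), (g (t + 1) - g t) :=
        Fin.sum_univ_eq_sum_range (fun t => g (t + 1) - g t) (m - 1)
    _ = g (m - 1) - g 0 := Finset.sum_range_sub g (m - 1)
    _ = f ⟨m - 1, Nat.sub_one_lt (by omega)⟩ - f 0 := by
        rw [hgt (m - 1) (by omega), hgt 0 (by omega)]
        have h0 : (⟨0, by omega⟩ : Fin m) = 0 := Fin.ext (by simp [Fin.val_zero])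
        rw [h0]

lemma consensus_iff_sum (m n : ℕ) [NeZero m] (hm : 2 ≤ m) (k : Fin m → ℕ)
    (C : (i : Fin m) → Matrix (Fin (k i)) (Fin n) ℝ) :
    (∀ x : Fin m → (Fin n → ℝ),
        x 0 = x ⟨m - 1, Nat.sub_one_lt (by omega)⟩ →
        (∀ i : Fin m, i ≠ 0 → (C i).mulVec (x i - x (i - 1)) = 0) → ∀ i j, x i = x j)
    ↔ ∀ d : {i : Fin m // i ≠ 0} → (Fin n → ℝ),
        (∀ i, (C i.1).mulVec (d i) = 0) → ∑ i, d i = 0 → ∀ i, d i = 0 := by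
  classical
  constructor
  · intro h d hker hsum i₀
    obtain ⟨i₁, hi₁⟩ := i₀
    set x : Fin m → (Fin n → ℝ) := fun i =>
      ∑ j ∈ Finset.univ.filter (fun j : {i : Fin m // i ≠ 0} => j.1.val ≤ i.val), d j with hx
    have hx0 : x 0 = 0 := by
      show (∑ j ∈ Finset.univ.filter
        (fun j : {i : Fin m // i ≠ 0} => j.1.val ≤ (0 : Fin m).val), d j) = 0
      apply Finset.sum_eq_zero
      intro j hj
      exfalso
      simp only [Finset.mem_filter, Finset.mem_univ, true_and, Fin.val_zero] at hj
      have hj : j.1.val ≤ 0 := by simpa using hj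
      have := (fin_ne_zero j.1).mp j.2
      omega
    have hxlast : x ⟨m - 1, Nat.sub_one_lt (by omega)⟩ = 0 := by
      show (∑ j ∈ Finset.univ.filter
        (fun j : {i : Fin m // i ≠ 0} =>
          j.1.val ≤ (⟨m - 1, Nat.sub_one_lt (by omega)⟩ : Fin m).val), d j) = 0
      have huniv : Finset.univ.filter
          (fun j : {i : Fin m // i ≠ 0} =>
            j.1.val ≤ (⟨m - 1, Nat.sub_one_lt (by omega)⟩ : Fin m).val) = Finset.univ := by
        apply Finset.eq_univ_iff_forall.mpr
        intro j
        simp only [Finset.mem_filter, Finset.mem_univ, true_and]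
        have := j.1.isLt
        omega
      rw [huniv, hsum]
    have hdiff : ∀ (i : Fin m) (hi : i ≠ 0), x i - x (i - 1) = d ⟨i, hi⟩ := by
      intro i hi
      have hiv : i.val ≠ 0 := (fin_ne_zero i).mp hi
      rw [fin_sub_one hm i hi]
      show (∑ j ∈ Finset.univ.filter
          (fun j : {i : Fin m // i ≠ 0} => j.1.val ≤ i.val), d j)
        - (∑ j ∈ Finset.univ.filter
          (fun j : {i : Fin m // i ≠ 0} =>
            j.1.val ≤ (⟨i.val - 1, by omega⟩ : Fin m).val), d j) = d ⟨i, hi⟩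
      have hsplit : Finset.univ.filter
          (fun j : {i : Fin m // i ≠ 0} => j.1.val ≤ i.val) =
          insert ⟨i, hi⟩ (Finset.univ.filter
            (fun j : {i : Fin m // i ≠ 0} =>
              j.1.val ≤ (⟨i.val - 1, by omega⟩ : Fin m).val)) := by
        ext j
        simp only [Finset.mem_filter, Finset.mem_univ, true_and, Finset.mem_insert,
          Subtype.ext_iff, Fin.ext_iff]
        have := (fin_ne_zero j.1).mp j.2
        constructor
        · intro hj
          rcases Nat.eq_or_lt_of_le hj with h | h
          · exact Or.inl h
          · exact Or.inr (by omega)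
        · rintro (h | h) <;> omega
      have hnotmem : (⟨i, hi⟩ : {i : Fin m // i ≠ 0}) ∉ Finset.univ.filter
          (fun j : {i : Fin m // i ≠ 0} =>
            j.1.val ≤ (⟨i.val - 1, by omega⟩ : Fin m).val) := by
        simp only [Finset.mem_filter, Finset.mem_univ, true_and]
        omega
      rw [hsplit, Finset.sum_insert hnotmem]
      abel
    have hall := h x (by rw [hx0, hxlast]) (by
      intro i hi
      rw [hdiff i hi]
      exact hker ⟨i, hi⟩)
    have heq := hall i₁ (i₁ - 1)
    rw [← hdiff i₁ hi₁, heq, sub_self]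
  · intro h x hx0 hloc
    set d : {i : Fin m // i ≠ 0} → (Fin n → ℝ) := fun i => x i.1 - x (i.1 - 1) with hd
    have hsum : ∑ i, d i = 0 := by
      rw [hd, telescope hm x, ← hx0, sub_self]
    have hstep : ∀ (i : Fin m), i ≠ 0 → x i = x (i - 1) := by
      intro i hi
      have := h d (fun i => hloc i.1 i.2) hsum ⟨i, hi⟩
      simp only [hd] at this
      exact sub_eq_zero.mp this
    have hall : ∀ (t : ℕ) (ht : t < m), x ⟨t, ht⟩ = x 0 := by
      intro t
      induction t with
      | zero =>
        intro ht
        have h0 : (⟨0, ht⟩ : Fin m) = 0 := Fin.ext (by simp [Fin.val_zero])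
        rw [h0]
      | succ s ih =>
        intro ht
        have hne : (⟨s + 1, ht⟩ : Fin m) ≠ 0 := by rw [fin_ne_zero]; simp
        rw [hstep ⟨s + 1, ht⟩ hne, fin_sub_one hm ⟨s + 1, ht⟩ hne]
        simpa using ih (by omega)
    intro i j
    rw [show i = (⟨i.val, i.isLt⟩ : Fin m) from rfl, show j = (⟨j.val, j.isLt⟩ : Fin m) from rfl,
      hall i.val i.isLt, hall j.val j.isLt]

end Aux

theorem stmt_3 (m n : ℕ) [NeZero m] (hm : 2 ≤ m) (k : Fin m → ℕ)
    (C : (i : Fin m) → Matrix (Fin (k i)) (Fin n) ℝ) :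
    ((∀ x : Fin m → (Fin n → ℝ),
        x 0 = x ⟨m - 1, by omega⟩ →
        (∀ i : Fin m, i ≠ 0 → (C i).mulVec (x i - x (i - 1)) = 0) → ∀ i j, x i = x j)
      ↔ IndepFamily (fun i : {i : Fin m // i ≠ 0} => LinearMap.ker (C i.1).mulVecLin)) ∧
    ((∃ (k' : Fin m → ℕ) (C' : (i : Fin m) → Matrix (Fin (k' i)) (Fin n) ℝ),
        (∀ i : Fin m, i ≠ 0 → LinearMap.ker (C' i).mulVecLin ≠ ⊥) ∧
        ∀ x : Fin m → (Fin n → ℝ),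
          x 0 = x ⟨m - 1, by omega⟩ →
          (∀ i : Fin m, i ≠ 0 → (C' i).mulVec (x i - x (i - 1)) = 0) → ∀ i j, x i = x j)
      ↔ m - 1 ≤ n) := by
  classical
  have key : ∀ (k' : Fin m → ℕ) (C' : (i : Fin m) → Matrix (Fin (k' i)) (Fin n) ℝ),
      (∀ x : Fin m → (Fin n → ℝ),
        x 0 = x ⟨m - 1, by omega⟩ →
        (∀ i : Fin m, i ≠ 0 → (C' i).mulVec (x i - x (i - 1)) = 0) → ∀ i j, x i = x j)
      ↔ IndepFamily (fun i : {i : Fin m // i ≠ 0} => LinearMap.ker (C' i.1).mulVecLin) := by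
    intro k' C'
    rw [consensus_iff_sum m n hm k' C', indepFamily_iff_sum]
    simp only [LinearMap.mem_ker, Matrix.mulVecLin_apply]
  have hcard : Fintype.card {i : Fin m // i ≠ 0} = m - 1 := by
    have h1 : Fintype.card {i : Fin m // ¬ (i = 0)} =
        Fintype.card (Fin m) - Fintype.card {i : Fin m // i = 0} :=
      Fintype.card_subtype_compl _
    rw [Fintype.card_subtype_eq, Fintype.card_fin] at h1
    exact h1
  refine ⟨key k C, ?_⟩
  constructor
  · rintro ⟨k', C', hne, hcons⟩
    have hindep := (key k' C').mp hcons
    have hiSup := (indepFamily_iff_iSupIndep _).mp hindep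
    have hle := hiSup.subtype_ne_bot_le_finrank
    have hcard2 : Fintype.card
        {i : {i : Fin m // i ≠ 0} // LinearMap.ker (C' i.1).mulVecLin ≠ ⊥} =
        Fintype.card {i : Fin m // i ≠ 0} :=
      Fintype.card_congr (Equiv.subtypeUnivEquiv (fun i => hne i.1 i.2))
    rw [hcard2, hcard, Module.finrank_fin_fun] at hle
    exact hle
  · intro hn
    have hn1 : 1 ≤ n := by omega
    set C' : (i : Fin m) → Matrix (Fin n) (Fin n) ℝ :=
      fun i => Matrix.of (fun r c : Fin n => if r = c ∧ c.val ≠ i.val - 1 then (1 : ℝ) else 0)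
      with hC'
    have hmv : ∀ (i : Fin m) (v : Fin n → ℝ) (r : Fin n),
        (C' i).mulVec v r = if r.val = i.val - 1 then 0 else v r := by
      intro i v r
      simp only [hC', Matrix.mulVec, dotProduct, Matrix.of_apply]
      rw [Finset.sum_eq_single r]
      · by_cases hr : r.val = i.val - 1 <;> simp [hr]
      · intro b _ hb
        simp [Ne.symm hb]
      · simp
    have htlt : ∀ i : Fin m, i ≠ 0 → i.val - 1 < n := by
      intro i hi
      have h1 := (fin_ne_zero i).mp hi
      have h2 := i.isLt
      omega
    refine ⟨fun _ => n, C', ?_, ?_⟩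
    · intro i hi
      rw [Submodule.ne_bot_iff]
      refine ⟨Pi.single ⟨i.val - 1, htlt i hi⟩ 1, ?_, ?_⟩
      · rw [LinearMap.mem_ker, Matrix.mulVecLin_apply]
        funext r
        rw [hmv]
        by_cases hr : r.val = i.val - 1
        · simp [hr]
        · have hrne : r ≠ ⟨i.val - 1, htlt i hi⟩ := by
            simp only [ne_eq, Fin.ext_iff]
            exact hr
          simp [Pi.single_eq_of_ne hrne, hr]
      · intro hzero
        have := congrFun hzero ⟨i.val - 1, htlt i hi⟩
        simp at this
    · rw [consensus_iff_sum m n hm (fun _ => n) C']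
      intro d hker hsum i
      have hd0 : ∀ (j : {i : Fin m // i ≠ 0}) (r : Fin n),
          r.val ≠ j.1.val - 1 → d j r = 0 := by
        intro j r hr
        have := congrFun (hker j) r
        rw [hmv] at this
        simpa [hr] using this
      funext r
      by_cases hr : r.val = i.1.val - 1
      · have hs := congrFun hsum r
        rw [Finset.sum_apply] at hs
        rw [Finset.sum_eq_single i] at hs
        · simpa using hs
        · intro j _ hj
          apply hd0 j r
          have h1 := (fin_ne_zero i.1).mp i.2
          have h2 := (fin_ne_zero j.1).mp j.2
          have h3 : j.1.val ≠ i.1.val := by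
            intro hc
            exact hj (Subtype.ext (Fin.ext hc))
          omega
        · simp
      · simpa using hd0 i r hr
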